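/- (Two-sided estimate for the minimum of a rational function.) Let p and q be polynomials in n variables of degree ≤ l with Bernstein coefficients of degree l on the standard simplex Δ, with b_α(q,l,Δ) > 0 for all |α| = l; let f = p/q with rational coefficients b_α(f,l,Δ) = b_α(p,l,Δ)/b_α(q,l,Δ). Let m = min_{|α|=l} b_α(f,l,Δ), attained at a multi-index α* with |α*| = l, and define δ = min( f(v_{α*}(l,Δ)), min_{i=0,…,n} b_{l·eᵢ}(f,l,Δ) ), where v_{α*}(l,Δ) is the grid point of α* and l·eᵢ are the vertex multi-indices. Then m ≤ min_{x∈Δ} f(x) ≤ δ. -/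
import Mathlib


open Finset

noncomputable section

/-- The standard simplex Δ in ℝⁿ. -/
def stdSimp (n : ℕ) : Set (Fin n → ℝ) :=
  {x | (∀ i, 0 ≤ x i) ∧ ∑ i, x i ≤ 1}

/-- Multi-indices α ∈ ℕ^{n+1} with |α| = k. -/
def multIdx (n k : ℕ) : Finset (Fin (n+1) → ℕ) :=
  Finset.Nat.antidiagonalTuple (n+1) k

lemma multIdx_nonempty (n k : ℕ) : (multIdx n k).Nonempty :=
  ⟨fun i => if i = 0 then k else 0, by
    simp [multIdx, Finset.Nat.mem_antidiagonalTuple]⟩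

/-- Bernstein basis polynomial of degree k on the standard simplex. -/
def bern (n k : ℕ) (α : Fin (n+1) → ℕ) (x : Fin n → ℝ) : ℝ :=
  ((k.factorial : ℝ) / ∏ i, ((α i).factorial : ℝ)) *
    (∏ i : Fin n, x i ^ α i.succ) * (1 - ∑ i, x i) ^ α 0

/-- i-th standard unit multi-index. -/
def unitIdx (n : ℕ) (i : Fin (n+1)) : Fin (n+1) → ℕ :=
  fun j => if j = i then 1 else 0

/-- vertex multi-index k·eᵢ -/
def vertIdx (n k : ℕ) (i : Fin (n+1)) : Fin (n+1) → ℕ :=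
  fun j => if j = i then k else 0

/-- second difference -/
def secondDiff (n : ℕ) (b : (Fin (n+1) → ℕ) → ℝ) (γ : Fin (n+1) → ℕ)
    (i j : Fin (n+1)) : ℝ :=
  b (γ + unitIdx n i + unitIdx n (j - 1)) + b (γ + unitIdx n (i - 1) + unitIdx n j)
    - b (γ + unitIdx n (i - 1) + unitIdx n (j - 1)) - b (γ + unitIdx n i + unitIdx n j)

lemma mem_multIdx {n k : ℕ} {α : Fin (n+1) → ℕ} :
    α ∈ multIdx n k ↔ ∑ i, α i = k := Finset.Nat.mem_antidiagonalTuple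

lemma vertIdx_mem (n k : ℕ) (i : Fin (n+1)) : vertIdx n k i ∈ multIdx n k := by
  simp [mem_multIdx, vertIdx]

lemma bern_nonneg {n k : ℕ} (α : Fin (n+1) → ℕ) {x : Fin n → ℝ}
    (hx : x ∈ stdSimp n) : 0 ≤ bern n k α x := by
  obtain ⟨h1, h2⟩ := hx
  apply mul_nonneg (mul_nonneg ?_ ?_) (pow_nonneg (by linarith) _)
  · positivity
  · exact Finset.prod_nonneg fun i _ => pow_nonneg (h1 i) _

lemma coeff_vertIdx (n l : ℕ) (i : Fin (n+1)) :
    ∏ j, (((vertIdx n l i j).factorial : ℝ)) = (l.factorial : ℝ) := by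
  simp [vertIdx, apply_ite Nat.factorial, Finset.prod_ite_eq']
lemma bern_vertIdx_zero (n l : ℕ) (x : Fin n → ℝ) :
    bern n l (vertIdx n l 0) x = (1 - ∑ i, x i) ^ l := by
  have h1 : ∀ j : Fin n, vertIdx n l 0 j.succ = 0 := fun j => if_neg (Fin.succ_ne_zero j)
  have h0 : vertIdx n l 0 0 = l := if_pos rfl
  rw [bern, coeff_vertIdx, h0]
  simp [h1, div_self, Nat.factorial_ne_zero, Nat.cast_ne_zero]

lemma bern_vertIdx_succ (n l : ℕ) (k : Fin n) (x : Fin n → ℝ) :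
    bern n l (vertIdx n l k.succ) x = x k ^ l := by
  have h1 : ∀ j : Fin n, vertIdx n l k.succ j.succ = if j = k then l else 0 := by
    intro j; simp [vertIdx, Fin.succ_inj]
  have h0 : vertIdx n l k.succ 0 = 0 := if_neg (Fin.succ_ne_zero k).symm
  rw [bern, coeff_vertIdx, h0]
  simp only [h1, apply_ite (x · ^ ·), pow_zero, Finset.prod_ite_eq', Finset.mem_univ, if_true]
  simp [div_self, Nat.factorial_ne_zero, Nat.cast_ne_zero]
/-- the i-th corner (vertex) of the simplex -/
def corner (n : ℕ) (i : Fin (n+1)) : Fin n → ℝ := fun j => if j.succ = i then 1 else 0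

lemma sum_corner (n : ℕ) (i : Fin (n+1)) :
    ∑ j, corner n i j = if i = 0 then 0 else 1 := by
  induction i using Fin.cases with
  | zero => simp [corner, Fin.succ_ne_zero]
  | succ k => simp [corner, Fin.succ_inj, Finset.sum_ite_eq', (Fin.succ_ne_zero k)]

lemma corner_mem (n : ℕ) (i : Fin (n+1)) : corner n i ∈ stdSimp n := by
  constructor
  · intro j; unfold corner; split <;> norm_num
  · rw [sum_corner]; split <;> norm_num

lemma bern_corner (n l : ℕ) (i : Fin (n+1)) (α : Fin (n+1) → ℕ) (hα : α ∈ multIdx n l) :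
    bern n l α (corner n i) = if α = vertIdx n l i then 1 else 0 := by
  rw [mem_multIdx] at hα
  by_cases h : α = vertIdx n l i
  · subst h; rw [if_pos rfl]
    induction i using Fin.cases with
    | zero => rw [bern_vertIdx_zero, sum_corner]; simp
    | succ k => rw [bern_vertIdx_succ]; simp [corner]
  · rw [if_neg h]
    have hex : ∃ j, j ≠ i ∧ α j ≠ 0 := by
      by_contra hcon
      push_neg at hcon
      apply h
      have hzero : ∀ j, j ≠ i → α j = 0 := fun j hj => hcon j hj
      have : ∑ j, α j = α i := Finset.sum_eq_single i (fun j _ hj => hzero j hj) (by simp)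
      funext j
      by_cases hji : j = i
      · subst hji; rw [this] at hα; simp [vertIdx, hα]
      · rw [hzero j hji]; simp [vertIdx, hji]
    obtain ⟨j, hji, hj0⟩ := hex
    unfold bern
    induction j using Fin.cases with
    | zero =>
      have hi0 : i ≠ 0 := fun hh => hji (hh ▸ rfl)
      rw [sum_corner, if_neg hi0]
      simp [zero_pow hj0]
    | succ k =>
      have : ∏ j : Fin n, corner n i j ^ α j.succ = 0 := by
        apply Finset.prod_eq_zero (Finset.mem_univ k)
        rw [corner, if_neg hji, zero_pow hj0]
      rw [this]; ring

lemma sum_eval_corner (n l : ℕ) (i : Fin (n+1)) (b : (Fin (n+1) → ℕ) → ℝ) :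
    ∑ α ∈ multIdx n l, b α * bern n l α (corner n i) = b (vertIdx n l i) := by
  rw [Finset.sum_congr rfl (fun α hα => by rw [bern_corner n l i α hα])]
  simp [mul_ite, Finset.sum_ite_eq', vertIdx_mem]

lemma q_pos {n l : ℕ} (c : (Fin (n+1) → ℕ) → ℝ) (hc : ∀ α ∈ multIdx n l, 0 < c α)
    {x : Fin n → ℝ} (hx : x ∈ stdSimp n) :
    0 < ∑ α ∈ multIdx n l, c α * bern n l α x := by
  obtain ⟨h1, h2⟩ := hx
  have hex : ∃ α ∈ multIdx n l, 0 < bern n l α x := by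
    by_cases h : ∑ i, x i < 1
    · exact ⟨vertIdx n l 0, vertIdx_mem n l 0, by
        rw [bern_vertIdx_zero]; exact pow_pos (by linarith) l⟩
    · have hs : ∑ i, x i = 1 := le_antisymm h2 (not_lt.mp h)
      have hk : ∃ k, 0 < x k := by
        by_contra hcon
        push_neg at hcon
        have : ∑ i, x i = 0 := Finset.sum_eq_zero fun i _ => le_antisymm (hcon i) (h1 i)
        rw [this] at hs; norm_num at hs
      obtain ⟨k, hk⟩ := hk
      exact ⟨vertIdx n l k.succ, vertIdx_mem n l k.succ, by
        rw [bern_vertIdx_succ]; positivity⟩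
  obtain ⟨α₀, hα₀, hpos⟩ := hex
  apply Finset.sum_pos' (fun α hα => mul_nonneg (hc α hα).le (bern_nonneg α ⟨h1, h2⟩))
  exact ⟨α₀, hα₀, mul_pos (hc α₀ hα₀) hpos⟩

lemma grid_mem {n l : ℕ} (α : Fin (n+1) → ℕ) (hα : α ∈ multIdx n l) :
    (fun j : Fin n => (α j.succ : ℝ) / l) ∈ stdSimp n := by
  rw [mem_multIdx] at hα
  constructor
  · intro j; positivity
  · rcases Nat.eq_zero_or_pos l with hl | hl
    · subst hl; simp
    · have hle : ∑ j : Fin n, α j.succ ≤ l := by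
        rw [← hα, Fin.sum_univ_succ]; omega
      rw [← Finset.sum_div, div_le_one (by exact_mod_cast hl)]
      exact_mod_cast hle
/-- two-sided estimate for the minimum of a rational function. -/
theorem stmt15 (n l : ℕ) (hn : 1 ≤ n)
    (p q : (Fin n → ℝ) → ℝ) (b c : (Fin (n+1) → ℕ) → ℝ)
    (hrepp : ∀ x, p x = ∑ α ∈ multIdx n l, b α * bern n l α x)
    (hrepq : ∀ x, q x = ∑ α ∈ multIdx n l, c α * bern n l α x)
    (hc : ∀ α ∈ multIdx n l, 0 < c α)
    (αs : Fin (n+1) → ℕ) (hαs : αs ∈ multIdx n l)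
    (m : ℝ) (hm : m = (multIdx n l).inf' (multIdx_nonempty n l) (fun α => b α / c α))
    (hattain : b αs / c αs = m)
    (δ : ℝ)
    (hδ : δ = min
      (p (fun i => (αs i.succ : ℝ) / l) / q (fun i => (αs i.succ : ℝ) / l))
      ((Finset.univ : Finset (Fin (n+1))).inf' Finset.univ_nonempty
        (fun i => b (vertIdx n l i) / c (vertIdx n l i)))) :
    m ≤ sInf ((fun x => p x / q x) '' stdSimp n) ∧
    sInf ((fun x => p x / q x) '' stdSimp n) ≤ δ := by
  set S := (fun x => p x / q x) '' stdSimp n with hS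
  have hqpos : ∀ x ∈ stdSimp n, 0 < q x := fun x hx => by
    rw [hrepq]; exact q_pos c hc hx
  have hlb : ∀ y ∈ S, m ≤ y := by
    rintro y ⟨x, hx, rfl⟩
    simp only
    rw [le_div_iff₀ (hqpos x hx), hrepp, hrepq, Finset.mul_sum]
    apply Finset.sum_le_sum
    intro α hα
    rw [← mul_assoc]
    apply mul_le_mul_of_nonneg_right _ (bern_nonneg α hx)
    have hmle : m ≤ b α / c α := hm ▸ Finset.inf'_le _ hα
    rwa [le_div_iff₀ (hc α hα)] at hmle
  have hne : S.Nonempty := ⟨_, ⟨corner n 0, corner_mem n 0, rfl⟩⟩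
  have hbdd : BddBelow S := ⟨m, hlb⟩
  refine ⟨le_csInf hne hlb, ?_⟩
  rw [hδ]
  apply le_min
  · exact csInf_le hbdd ⟨_, grid_mem αs hαs, rfl⟩
  · obtain ⟨i₀, -, hi₀⟩ := Finset.exists_mem_eq_inf' Finset.univ_nonempty
      (fun i => b (vertIdx n l i) / c (vertIdx n l i))
    rw [hi₀]
    have heval : p (corner n i₀) / q (corner n i₀)
        = b (vertIdx n l i₀) / c (vertIdx n l i₀) := by
      rw [hrepp, hrepq, sum_eval_corner, sum_eval_corner]
    exact heval ▸ csInf_le hbdd ⟨corner n i₀, corner_mem n i₀, rfl⟩
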